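/- Let Y1 and Y2 be finitely-supported random variables. Then H∞(Y1) ≥ H̃∞(Y1 | Y2) ≥ H∞(Y1) - log2(|supp(Y2)|), where supp(Y2) is the support of Y2. -/
import Mathlib


open scoped Classical
open Finset

/-- Min-entropy of `Y1` for a joint finitely-supported distribution `μ` on `A × B`:
`H∞(Y1) = -log2 (max_a Pr[Y1 = a])`. -/
noncomputable def HinfFst {A B : Type*} [Fintype A] [Fintype B] [Nonempty A]
    (μ : A × B → ℝ) : ℝ :=
  -Real.logb 2 (univ.sup' univ_nonempty fun a : A => ∑ b : B, μ (a, b))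

/-- Average min-entropy `H̃∞(Y1 | Y2) = -log2 (E_{Y2}[max_a Pr[Y1 = a | Y2]])
  = -log2 (∑_b max_a Pr[Y1 = a ∧ Y2 = b])`. -/
noncomputable def HtildeInf {A B : Type*} [Fintype A] [Fintype B] [Nonempty A]
    (μ : A × B → ℝ) : ℝ :=
  -Real.logb 2 (∑ b : B, univ.sup' univ_nonempty fun a : A => μ (a, b))

/-- `H∞(Y1) ≥ H̃∞(Y1 | Y2) ≥ H∞(Y1) - log2 |supp(Y2)|`. -/
theorem stmt_7 {A B : Type*} [Fintype A] [Fintype B] [Nonempty A] [Nonempty B]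
    (μ : A × B → ℝ) (hpos : ∀ ab, 0 ≤ μ ab) (hsum : ∑ ab : A × B, μ ab = 1) :
    HinfFst μ ≥ HtildeInf μ ∧
    HtildeInf μ ≥ HinfFst μ -
      Real.logb 2 ((univ.filter fun b : B => ∑ a : A, μ (a, b) ≠ 0).card) := by
  classical
  set M := univ.sup' univ_nonempty fun a : A => ∑ b : B, μ (a, b) with hM
  set S := ∑ b : B, univ.sup' univ_nonempty (fun a : A => μ (a, b)) with hS
  have hsum' : ∑ a : A, ∑ b : B, μ (a, b) = 1 := by
    rw [← hsum, Fintype.sum_prod_type]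
  have hMpos : 0 < M := by
    by_contra h
    push_neg at h
    have : (1 : ℝ) ≤ 0 := by
      rw [← hsum']
      apply Finset.sum_nonpos
      intro a _
      exact le_trans (Finset.le_sup' (fun a : A => ∑ b : B, μ (a, b)) (mem_univ a)) h
    linarith
  have hMS : M ≤ S := by
    obtain ⟨a0, -, ha0⟩ :=
      Finset.exists_mem_eq_sup' (univ_nonempty (α := A)) (fun a : A => ∑ b : B, μ (a, b))
    rw [hM, ha0]
    exact Finset.sum_le_sum fun b _ => Finset.le_sup' (fun a : A => μ (a, b)) (mem_univ a0)
  have hSpos : 0 < S := lt_of_lt_of_le hMpos hMS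
  -- each sup' of column ≤ M
  have hcol : ∀ b : B, (univ.sup' univ_nonempty fun a : A => μ (a, b)) ≤ M := by
    intro b
    apply Finset.sup'_le
    intro a _
    calc μ (a, b) ≤ ∑ b' : B, μ (a, b') :=
          Finset.single_le_sum (fun b' _ => hpos (a, b')) (mem_univ b)
      _ ≤ M := Finset.le_sup' (fun a : A => ∑ b : B, μ (a, b)) (mem_univ a)
  set F := univ.filter fun b : B => ∑ a : A, μ (a, b) ≠ 0 with hF
  have hKpos : 0 < (F.card : ℝ) := by
    have : F.Nonempty := by
      by_contra h
      rw [Finset.not_nonempty_iff_eq_empty] at h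
      have hz : ∀ b : B, ∑ a : A, μ (a, b) = 0 := by
        intro b
        by_contra hb
        have : b ∈ F := by simp [hF, hb]
        simp [h] at this
      have : (1 : ℝ) = 0 := by
        rw [← hsum']
        rw [Finset.sum_comm]
        exact Finset.sum_eq_zero fun b _ => hz b
      norm_num at this
    exact_mod_cast Finset.card_pos.mpr this
  have hSK : S ≤ F.card * M := by
    have hzero : ∀ b ∉ F, (univ.sup' univ_nonempty fun a : A => μ (a, b)) = 0 := by
      intro b hb
      simp only [hF, mem_filter, mem_univ, true_and, not_not] at hb
      have hz : ∀ a : A, μ (a, b) = 0 := by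
        intro a
        have := (Finset.sum_eq_zero_iff_of_nonneg (fun a _ => hpos (a, b))).mp hb
        exact this a (mem_univ a)
      apply le_antisymm
      · exact Finset.sup'_le _ _ fun a _ => le_of_eq (hz a)
      · obtain ⟨a0⟩ := ‹Nonempty A›
        rw [← hz a0]
        exact Finset.le_sup' (fun a : A => μ (a, b)) (mem_univ a0)
    calc S = ∑ b ∈ F, univ.sup' univ_nonempty (fun a : A => μ (a, b)) := by
          rw [hS]
          exact (Finset.sum_subset (Finset.subset_univ F)
            (fun b _ hb => hzero b hb)).symm
      _ ≤ ∑ _b ∈ F, M := Finset.sum_le_sum fun b _ => hcol b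
      _ = F.card * M := by rw [Finset.sum_const, nsmul_eq_mul]
  constructor
  · unfold HinfFst HtildeInf
    have := Real.logb_le_logb_of_le one_lt_two hMpos hMS
    simp only [← hM, ← hS]
    linarith
  · unfold HinfFst HtildeInf
    simp only [← hM, ← hS, ← hF]
    have h1 : Real.logb 2 S ≤ Real.logb 2 (F.card * M) :=
      Real.logb_le_logb_of_le one_lt_two hSpos hSK
    rw [Real.logb_mul (ne_of_gt hKpos) (ne_of_gt hMpos)] at h1
    linarith
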